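/- Let p be a prime and R an 𝔽_p-algebra such that every proper subring of R is right Artinian. Then R is right Artinian. -/

import Mathlib

/-- Every element of the subring generated by (the underlying set of) a left ideal
differs from the ideal by an integer multiple of `1`. -/
lemma aux_mem_closure_ideal {A : Type*} [Ring A] (K : Ideal A) {x : A}
    (hx : x ∈ Subring.closure (K : Set A)) : ∃ n : ℤ, x - (n : A) ∈ K := by
  induction hx using Subring.closure_induction with
  | mem y hy => exact ⟨0, by simpa using hy⟩
  | zero => exact ⟨0, by simp⟩
  | one => exact ⟨1, by simp⟩
  | add y z hy hz ihy ihz =>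
      obtain ⟨n, hn⟩ := ihy; obtain ⟨m, hm⟩ := ihz
      exact ⟨n + m, by push_cast; convert K.add_mem hn hm using 1; abel⟩
  | neg y hy ihy =>
      obtain ⟨n, hn⟩ := ihy
      exact ⟨-n, by push_cast; convert K.neg_mem hn using 1; abel⟩
  | mul y z hy hz ihy ihz =>
      obtain ⟨n, hn⟩ := ihy; obtain ⟨m, hm⟩ := ihz
      refine ⟨n * m, ?_⟩
      have h1 : (y - n) * (z - m) ∈ K := K.mul_mem_left _ hm
      have h2 : (n : A) * (z - m) ∈ K := K.mul_mem_left _ hm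
      have h3 : (y - (n : A)) * (m : A) ∈ K := by
        rw [← Int.cast_comm]; exact K.mul_mem_left _ hn
      have : (y - n) * (z - m) + (n : A) * (z - m) + (y - (n : A)) * (m : A) ∈ K :=
        K.add_mem (K.add_mem h1 h2) h3
      convert this using 1
      push_cast
      noncomm_ring

/-- If `p` is a prime and `R` is an `𝔽ₚ`-algebra all of whose proper subrings are
right Artinian, then `R` is right Artinian. -/
theorem stmt_14 {p : ℕ} [Fact p.Prime] {R : Type*} [Ring R] [Algebra (ZMod p) R]
    (hArt : ∀ S : Subring R, S ≠ ⊤ → IsArtinianRing Sᵐᵒᵖ) :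
    IsArtinianRing Rᵐᵒᵖ := by
  by_contra hR
  -- extract a strictly descending chain of left ideals of `Rᵐᵒᵖ` (right ideals of `R`)
  have hR' : ¬ WellFounded ((· < ·) : Ideal Rᵐᵒᵖ → Ideal Rᵐᵒᵖ → Prop) := fun h => hR ⟨h⟩
  rw [RelEmbedding.wellFounded_iff_isEmpty, not_isEmpty_iff] at hR'
  obtain ⟨f⟩ := hR'
  have hdesc : ∀ n : ℕ, f (n + 1) < f n := fun n => f.map_rel_iff.2 (Nat.lt_succ_self n)
  have hanti : StrictAnti (fun n => f n) := strictAnti_nat_of_succ_lt hdesc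
  set L : Ideal Rᵐᵒᵖ := f 3 with hL
  set K : Ideal Rᵐᵒᵖ := f 2 with hK
  have hLK : L < K := hanti (by norm_num)
  have hKtop : K ≠ ⊤ := ne_top_of_lt (hanti (Nat.lt_succ_self 1) : K < f 1)
  -- the subring of `Rᵐᵒᵖ` generated by `L`
  set S' : Subring Rᵐᵒᵖ := Subring.closure (L : Set Rᵐᵒᵖ) with hS'
  -- S' is not an Artinian ring, because the chain `f (n+3)` lives inside it
  have hLS' : (L : Set Rᵐᵒᵖ) ⊆ (S' : Set Rᵐᵒᵖ) := Subring.subset_closure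
  have hsub : ∀ n : ℕ, (f (n + 3) : Set Rᵐᵒᵖ) ⊆ (S' : Set Rᵐᵒᵖ) := by
    intro n x hx
    exact hLS' (hanti.antitone (by omega : 3 ≤ n + 3) hx)
  have hS'notArt : ¬ IsArtinianRing S' := by
    intro hArtS'
    set g : ℕ → Ideal S' := fun n => (f (n + 3)).comap (S'.subtype : S' →+* Rᵐᵒᵖ) with hg
    have hgdesc : ∀ n, g (n + 1) < g n := by
      intro n
      refine lt_of_le_of_ne (Ideal.comap_mono (hdesc (n + 3)).le) ?_
      intro heq
      obtain ⟨x, hxmem, hxnot⟩ := SetLike.exists_of_lt (hdesc (n + 3))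
      have hxS' : x ∈ S' := hsub n hxmem
      have : (⟨x, hxS'⟩ : S') ∈ g n := hxmem
      rw [← heq] at this
      exact hxnot this
    exact (RelEmbedding.natGT g hgdesc).not_wellFounded
      (isArtinian_iff _ _ |>.1 hArtS')
  -- hence `S' = ⊤` by the hypothesis on proper subrings
  have hS'top : S' = ⊤ := by
    by_contra hne
    have hUnop : S'.unop ≠ ⊤ := by
      intro h
      apply hne
      have := congrArg Subring.op h
      rwa [Subring.op_unop, Subring.op_top] at this
    haveI : IsArtinianRing (S'.unop)ᵐᵒᵖ := hArt S'.unop hUnop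
    have h2 : IsArtinianRing S'.unop.op :=
      (Subring.mopRingEquivOp S'.unop).surjective.isArtinianRing
    rw [Subring.op_unop] at h2
    exact hS'notArt h2
  -- now derive a contradiction
  obtain ⟨x, hxK, hxL⟩ := SetLike.exists_of_lt hLK
  have hxS' : x ∈ Subring.closure (L : Set Rᵐᵒᵖ) := by rw [← hS', hS'top]; trivial
  obtain ⟨n, hn⟩ := aux_mem_closure_ideal L hxS'
  have hnK : ((n : ℤ) : Rᵐᵒᵖ) ∈ K := by
    have : x - ((n : ℤ) : Rᵐᵒᵖ) ∈ K := hLK.le hn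
    have := K.sub_mem hxK this
    simpa using this
  have hcast : ((n : ℤ) : Rᵐᵒᵖ) = algebraMap (ZMod p) Rᵐᵒᵖ ((n : ℤ) : ZMod p) := by
    rw [map_intCast]
  by_cases hz : ((n : ℤ) : ZMod p) = 0
  · have hn0 : ((n : ℤ) : Rᵐᵒᵖ) = 0 := by rw [hcast, hz, map_zero]
    rw [hn0, sub_zero] at hn
    exact hxL hn
  · -- `n` is invertible mod `p`, so `K` contains a unit
    have : (1 : Rᵐᵒᵖ) ∈ K := by
      have hinv : (((n : ZMod p))⁻¹ * (n : ZMod p)) = 1 := by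
        field_simp
      have : algebraMap (ZMod p) Rᵐᵒᵖ ((n : ZMod p))⁻¹ * ((n : ℤ) : Rᵐᵒᵖ) ∈ K :=
        K.mul_mem_left _ hnK
      rwa [hcast, ← map_mul, hinv, map_one] at this
    exact hKtop ((Ideal.eq_top_iff_one K).2 this)
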